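/- Let C be a finitary extensive category with finite products, let F and G be endofunctors of C, and let φ be a functor-functor interaction law of F and G. If F has a commutative binary operation, i.e. there is a family of morphisms c_X : X ⨯ X ⟶ F X natural in X satisfying c_X = c_X ∘ swap_{X,X} (where swap is the symmetry of the product), then G is constant zero: for every object Y, the object G Y is initial (G Y ≅ ⊥). -/

import Mathlib

open CategoryTheory CategoryTheory.Limits

universe v u

/-- In a finitary extensive category, if `k : A ⟶ T ⨿ T` is fixed by the braiding of the
coproduct, then `A` is initial. -/
lemma initial_of_braid_fixed {C : Type u} [Category.{v} C] [FinitaryExtensive C]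
    {A T : C} (k : A ⟶ T ⨿ T) (hk : k ≫ (coprod.braiding T T).hom = k) :
    Nonempty (IsInitial A) := by
  -- disjointness of the coproduct
  have hd : IsPullback (initial.to T) (initial.to T)
      (coprod.inl : T ⟶ T ⨿ T) (coprod.inr : T ⟶ T ⨿ T) := by
    exact
      FinitaryExtensive.isPullback_initial_to_binaryCofan (c := BinaryCofan.mk coprod.inl coprod.inr) (coprodIsCoprod T T)
  -- the two pullbacks of k along the injections
  have h1 : IsPullback (pullback.fst k (coprod.inl : T ⟶ T ⨿ T))
      (pullback.snd k coprod.inl) k coprod.inl := IsPullback.of_hasPullback _ _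
  have h2 : IsPullback (pullback.fst k (coprod.inr : T ⟶ T ⨿ T))
      (pullback.snd k coprod.inr) k coprod.inr := IsPullback.of_hasPullback _ _
  -- both pullbacks are initial
  have key1 : (pullback.snd k (coprod.inl : T ⟶ T ⨿ T)) ≫ coprod.inl =
      (pullback.snd k coprod.inl) ≫ coprod.inr := by
    have h : pullback.fst k (coprod.inl : T ⟶ T ⨿ T) ≫ k =
        pullback.snd k coprod.inl ≫ coprod.inl := pullback.condition
    calc (pullback.snd k (coprod.inl : T ⟶ T ⨿ T)) ≫ coprod.inl
        = pullback.fst k coprod.inl ≫ k := h.symm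
      _ = pullback.fst k coprod.inl ≫ (k ≫ (coprod.braiding T T).hom) := by rw [hk]
      _ = (pullback.snd k coprod.inl ≫ coprod.inl) ≫ (coprod.braiding T T).hom := by
            rw [← Category.assoc, h]
      _ = (pullback.snd k coprod.inl) ≫ coprod.inr := by simp [coprod.inl_desc]
  have key2 : (pullback.snd k (coprod.inr : T ⟶ T ⨿ T)) ≫ coprod.inl =
      (pullback.snd k coprod.inr) ≫ coprod.inr := by
    have h : pullback.fst k (coprod.inr : T ⟶ T ⨿ T) ≫ k =
        pullback.snd k coprod.inr ≫ coprod.inr := pullback.condition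
    calc (pullback.snd k (coprod.inr : T ⟶ T ⨿ T)) ≫ coprod.inl
        = (pullback.snd k coprod.inr ≫ coprod.inr) ≫ (coprod.braiding T T).hom := by simp [coprod.inr_desc]
      _ = pullback.fst k coprod.inr ≫ (k ≫ (coprod.braiding T T).hom) := by
            rw [← Category.assoc, h]
      _ = pullback.fst k coprod.inr ≫ k := by rw [hk]
      _ = (pullback.snd k coprod.inr) ≫ coprod.inr := h
  have hP : IsInitial (pullback k (coprod.inl : T ⟶ T ⨿ T)) := by
    have l := hd.lift (pullback.snd k coprod.inl) (pullback.snd k coprod.inl) key1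
    exact initialIsInitial.ofIso (asIso l).symm
  have hQ : IsInitial (pullback k (coprod.inr : T ⟶ T ⨿ T)) := by
    have l := hd.lift (pullback.snd k coprod.inr) (pullback.snd k coprod.inr) key2
    exact initialIsInitial.ofIso (asIso l).symm
  -- by van Kampen, A is the coproduct of the two pullbacks
  have vk := FinitaryExtensive.vanKampen _ (coprodIsCoprod T T)
  rw [BinaryCofan.isVanKampen_iff] at vk
  have hcolim : Nonempty (IsColimit (BinaryCofan.mk
      (pullback.fst k (coprod.inl : T ⟶ T ⨿ T)) (pullback.fst k coprod.inr))) := by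
    refine (vk (BinaryCofan.mk _ _) (pullback.snd k coprod.inl)
      (pullback.snd k coprod.inr) k ?_ ?_).mpr ⟨?_, ?_⟩
    · exact h1.w.symm
    · exact h2.w.symm
    · exact h1
    · exact h2
  obtain ⟨hc⟩ := hcolim
  -- a coproduct of two initial objects is initial
  refine ⟨IsInitial.ofUniqueHom (fun Z => hc.desc (BinaryCofan.mk (hP.to Z) (hQ.to Z)))
    (fun Z m => ?_)⟩
  refine hc.uniq (BinaryCofan.mk (hP.to Z) (hQ.to Z)) m ?_
  rintro ⟨⟨⟩⟩
  · exact hP.hom_ext _ _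
  · exact hQ.hom_ext _ _

/-- If a functor `F` on a finitary extensive category with finite products has a commutative
binary operation, then any functor `G` interacting with it via an interaction law `φ` is
constant zero, i.e. `G Y` is initial for every `Y`. -/
theorem stmt_1 {C : Type u} [Category.{v} C] [FinitaryExtensive C] [HasFiniteProducts C]
    (F G : C ⥤ C)
    (φ : ∀ X Y : C, F.obj X ⨯ G.obj Y ⟶ X ⨯ Y)
    (φ_nat : ∀ {X X' Y Y' : C} (f : X ⟶ X') (g : Y ⟶ Y'),
      prod.map (F.map f) (G.map g) ≫ φ X' Y' = φ X Y ≫ prod.map f g)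
    (c : ∀ X : C, X ⨯ X ⟶ F.obj X)
    (c_nat : ∀ {X X' : C} (f : X ⟶ X'), prod.map f f ≫ c X' = c X ≫ F.map f)
    (c_comm : ∀ X : C, (prod.braiding X X).hom ≫ c X = c X) :
    ∀ Y : C, Nonempty (IsInitial (G.obj Y)) := by
  intro Y
  set T : C := ⊤_ C with hT
  set X : C := T ⨿ T with hX
  set τ : X ⟶ X := (coprod.braiding T T).hom with hτ
  set t : G.obj Y ⟶ T := terminal.from _ with ht
  -- the crucial morphism
  set k : G.obj Y ⟶ X :=
    prod.lift (prod.lift (t ≫ coprod.inl) (t ≫ coprod.inr) ≫ c X) (𝟙 _) ≫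
      φ X Y ≫ prod.fst with hkdef
  apply initial_of_braid_fixed k
  -- it suffices to show `k ≫ τ = k`
  show k ≫ τ = k
  have step1 : k ≫ τ =
      prod.lift (prod.lift (t ≫ coprod.inl) (t ≫ coprod.inr) ≫ c X) (𝟙 _) ≫
        (prod.map (F.map τ) (G.map (𝟙 Y)) ≫ φ X Y) ≫ prod.fst := by
    rw [φ_nat τ (𝟙 Y)]
    simp [hkdef]
  have step2 :
      prod.lift (prod.lift (t ≫ coprod.inl) (t ≫ coprod.inr) ≫ c X) (𝟙 (G.obj Y)) ≫
        prod.map (F.map τ) (G.map (𝟙 Y)) =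
      prod.lift (prod.lift (t ≫ coprod.inr) (t ≫ coprod.inl) ≫ c X) (𝟙 _) := by
    have hc' : c X ≫ F.map τ = prod.map τ τ ≫ c X := (c_nat τ).symm
    simp only [prod.lift_map, Category.assoc, hc', CategoryTheory.Functor.map_id,
      Category.id_comp]
    congr 1
    rw [← Category.assoc, prod.lift_map]
    simp [hτ, coprod.inl_desc, coprod.inr_desc]
    rfl
  have step3 :
      prod.lift (t ≫ coprod.inr) (t ≫ coprod.inl) ≫ c X =
      prod.lift (t ≫ coprod.inl) (t ≫ coprod.inr) ≫ c X := by
    have h : prod.lift (t ≫ coprod.inr) (t ≫ coprod.inl) =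
        prod.lift (t ≫ coprod.inl) (t ≫ coprod.inr) ≫ (prod.braiding X X).hom := by
      simp
      congr 1
      · exact (prod.lift_snd _ _).symm
      · exact (prod.lift_fst _ _).symm
    rw [h, Category.assoc, c_comm]
  rw [step1]
  simp only [← Category.assoc]
  rw [step2, step3]
  simp [hkdef]
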